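/- Let G be a Lie group, Γ ⊆ Isom(X) a group of deck transformations acting properly discontinuously and cocompactly on a manifold X, and G⁰ a subgroup such that Γ₀ = Γ ∩ G⁰ is a cocompact lattice in G⁰ with compact fundamental domain F containing the identity. Then the closed subgroup G′ generated by G⁰ and Γ acts properly on X. -/

import Mathlib

open Pointwise

/-- For a continuous action and compact `A`, the "return set"
`{g | (g • A ∩ A).Nonempty}` is closed. -/
theorem stmt_10_aux_closed {G X : Type*} [Group G] [TopologicalSpace G]
    [TopologicalSpace X] [T2Space X] [MulAction G X]
    (hcont : Continuous fun p : G × X => p.1 • p.2)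
    (A : Set X) (hA : IsCompact A) :
    IsClosed {g : G | ((g • A) ∩ A).Nonempty} := by
  haveI : CompactSpace ↥A := isCompact_iff_compactSpace.mp hA
  have hAcl : IsClosed A := hA.isClosed
  have hE : IsClosed {p : G × ↥A | p.1 • (p.2 : X) ∈ A} := by
    have hc : Continuous fun p : G × ↥A => p.1 • (p.2 : X) :=
      hcont.comp (continuous_fst.prodMk (continuous_subtype_val.comp continuous_snd))
    exact hAcl.preimage hc
  have himg : {g : G | ((g • A) ∩ A).Nonempty} =
      Prod.fst '' {p : G × ↥A | p.1 • (p.2 : X) ∈ A} := by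
    ext g
    constructor
    · rintro ⟨x, hx1, hx2⟩
      obtain ⟨a, ha, rfl⟩ := hx1
      exact ⟨(g, ⟨a, ha⟩), hx2, rfl⟩
    · rintro ⟨⟨g', a⟩, hp, rfl⟩
      exact ⟨g' • (a : X), ⟨a, a.2, rfl⟩, hp⟩
  rw [himg]
  exact isClosedMap_fst_of_compactSpace _ hE

/-- Let `Γ ⊆ G = Isom(X)` be a group of deck transformations acting properly
discontinuously and cocompactly on `X`, and let `G⁰` be a (normal) subgroup such that
`Γ₀ = Γ ∩ G⁰` is cocompact in `G⁰`, with compact fundamental domain `F ⊆ G⁰` containing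
the identity (so `G⁰ = Γ₀ • F`).  Then the closed subgroup `G′` generated by `G⁰` and `Γ`
acts properly on `X`: for every compact `A ⊆ X`, the set `{g ∈ G′ : gA ∩ A ≠ ∅}` is
compact. -/
theorem stmt_10 {G X : Type*} [Group G] [TopologicalSpace G] [IsTopologicalGroup G]
    [T2Space G] [TopologicalSpace X] [T2Space X] [LocallyCompactSpace X]
    [MulAction G X] (hcont : Continuous fun p : G × X => p.1 • p.2)
    (Γ G0 : Subgroup G) [G0.Normal] (hΓclosed : IsClosed (Γ : Set G))
    (hpd : ∀ A : Set X, IsCompact A →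
      {γ : G | γ ∈ Γ ∧ ((γ • A) ∩ A).Nonempty}.Finite)
    (hcc : ∃ D : Set X, IsCompact D ∧ ⋃ γ ∈ Γ, γ • D = Set.univ)
    (F : Set G) (hFcompact : IsCompact F) (hFsub : F ⊆ G0) (hFone : (1 : G) ∈ F)
    (hFdom : ∀ g ∈ G0, ∃ γ ∈ Γ ⊓ G0, g ∈ γ • F) :
    ∀ A : Set X, IsCompact A →
      IsCompact {g : G | g ∈ (G0 ⊔ Γ).topologicalClosure ∧ ((g • A) ∩ A).Nonempty} := by
  intro A hA
  -- a compact superset `K` of `A` whose interior contains `A`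
  obtain ⟨K, hKcomp, hAK⟩ := exists_compact_superset hA
  -- `F • A` as a compact set
  set FA : Set X := (fun p : G × X => p.1 • p.2) '' (F ×ˢ A) with hFAdef
  have hFAcomp : IsCompact FA := (hFcompact.prod hA).image hcont
  set A2 : Set X := K ∪ FA with hA2def
  have hA2comp : IsCompact A2 := hKcomp.union hFAcomp
  -- the finite set of `γ ∈ Γ` returning `A2` to itself
  set T : Set G := {γ : G | γ ∈ Γ ∧ ((γ • A2) ∩ A2).Nonempty} with hTdef
  have hTfin : T.Finite := hpd A2 hA2comp
  have hCcomp : IsCompact (T * F) := hTfin.isCompact.mul hFcompact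
  have hCclosed : IsClosed (T * F) := hCcomp.isClosed
  -- decomposition of elements of `G0 ⊔ Γ`
  have hdec : ∀ h : G, h ∈ (G0 ⊔ Γ : Subgroup G) → ∃ γ ∈ Γ, ∃ f ∈ F, h = γ * f := by
    intro h hh
    rw [sup_comm] at hh
    have hh' : h ∈ (Γ : Set G) * (G0 : Set G) := by
      rw [← Subgroup.mul_normal Γ G0]; exact hh
    obtain ⟨γ, hγ, g0, hg0, rfl⟩ := hh'
    obtain ⟨γ0, hγ0, hmem⟩ := hFdom g0 hg0
    obtain ⟨f, hf, rfl⟩ := hmem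
    refine ⟨γ * γ0, Γ.mul_mem hγ hγ0.1, f, hf, ?_⟩
    simp [mul_assoc, smul_eq_mul]
  -- main inclusion
  have hsub : {g : G | g ∈ (G0 ⊔ Γ).topologicalClosure ∧ ((g • A) ∩ A).Nonempty}
      ⊆ T * F := by
    rintro g ⟨hgcl, x, hx1, hx2⟩
    obtain ⟨a, ha, rfl⟩ := hx1
    have hgcl' : g ∈ closure ((G0 ⊔ Γ : Subgroup G) : Set G) := hgcl
    -- open neighborhood condition
    have hVopen : IsOpen ((fun h : G => h • a) ⁻¹' interior K) :=
      (hcont.comp (continuous_id.prodMk continuous_const)).isOpen_preimage _ isOpen_interior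
    have hgV : g ∈ (fun h : G => h • a) ⁻¹' interior K := hAK hx2
    have hmem : g ∈ closure (((fun h : G => h • a) ⁻¹' interior K) ∩
        ((G0 ⊔ Γ : Subgroup G) : Set G)) :=
      hVopen.inter_closure ⟨hgV, hgcl'⟩
    have hss : ((fun h : G => h • a) ⁻¹' interior K) ∩
        ((G0 ⊔ Γ : Subgroup G) : Set G) ⊆ T * F := by
      rintro h ⟨hhV, hhmem⟩
      obtain ⟨γ, hγ, f, hf, rfl⟩ := hdec h hhmem
      have hfa : f • a ∈ FA := ⟨(f, a), ⟨hf, ha⟩, rfl⟩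
      have hKmem : (γ * f) • a ∈ K := interior_subset hhV
      have hγT : γ ∈ T := by
        refine ⟨hγ, γ • (f • a), ?_, ?_⟩
        · exact Set.smul_mem_smul_set (Set.mem_union_right _ hfa)
        · rw [← mul_smul]; exact Set.mem_union_left _ hKmem
      exact Set.mul_mem_mul hγT hf
    exact (closure_minimal hss hCclosed) hmem
  -- the set is closed
  have hclosed : IsClosed {g : G | g ∈ (G0 ⊔ Γ).topologicalClosure ∧
      ((g • A) ∩ A).Nonempty} := by
    have : {g : G | g ∈ (G0 ⊔ Γ).topologicalClosure ∧ ((g • A) ∩ A).Nonempty} =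
        closure ((G0 ⊔ Γ : Subgroup G) : Set G) ∩ {g : G | ((g • A) ∩ A).Nonempty} := rfl
    rw [this]
    exact isClosed_closure.inter (stmt_10_aux_closed hcont A hA)
  exact hCcomp.of_isClosed_subset hclosed hsub
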